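/- arXiv:2502.11333 — 2 statements merged into one kernel-verified Lean document; each statement's English description precedes it below -/
import Mathlib

section
/- Let n ≥ 1, let c : EuclideanSpace ℝ (Fin n) → ℝ → EuclideanSpace ℝ (Fin n) be differentiable (jointly in its two arguments), and let v : ℝ → EuclideanSpace ℝ (Fin n) → EuclideanSpace ℝ (Fin n) be a time-dependent vector field. Suppose the consistency identity holds everywhere: for all x and t, (D_x c(x,t))(v t x) + ∂_t c(x,t) = 0, where D_x c(x,t) is the Fréchet derivative of c in its first argument and ∂_t c(x,t) the derivative in its second argument. Suppose further the boundary condition c(x, 0) = x holds for all x. Then for any differentiable curve x : ℝ → EuclideanSpace ℝ (Fin n) satisfying x'(t) = v t (x t) for all t ∈ [0,1], the map t ↦ c(x t, t) is constant on [0,1]; in particular c(x 1, 1) = x 0, i.e. the consistency function evaluated at the noisy endpoint equals the reverse-time ODE solution at time 0. -/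
/-- Key intermediate claim in the proof of Lemma 2 of the paper: a consistency function
satisfying the infinitesimal consistency identity and the boundary condition `c x 0 = x`
is constant along any ODE trajectory of the vector field `v` on `[0,1]`, and in particular
maps the endpoint at time 1 to the time-0 state of the trajectory. -/
theorem consistency_function_constant_along_trajectory
    (n : ℕ) (hn : 1 ≤ n)
    (c : EuclideanSpace ℝ (Fin n) → ℝ → EuclideanSpace ℝ (Fin n))
    (v : ℝ → EuclideanSpace ℝ (Fin n) → EuclideanSpace ℝ (Fin n))
    (hc : Differentiable ℝ (fun q : EuclideanSpace ℝ (Fin n) × ℝ => c q.1 q.2))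
    (hconsist : ∀ x t,
      (fderiv ℝ (fun y => c y t) x) (v t x) + deriv (fun s => c x s) t = 0)
    (hbound : ∀ x, c x 0 = x)
    (x : ℝ → EuclideanSpace ℝ (Fin n))
    (hx : Differentiable ℝ x)
    (hode : ∀ t ∈ Set.Icc (0:ℝ) 1, HasDerivAt x (v t (x t)) t) :
    (∀ t ∈ Set.Icc (0:ℝ) 1, c (x t) t = c (x 0) 0) ∧ c (x 1) 1 = x 0 := by
  have key : ∀ t ∈ Set.Icc (0:ℝ) 1, HasDerivAt (fun s => c (x s) s) 0 t := by
    intro t ht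
    have hFd : HasFDerivAt (fun q : EuclideanSpace ℝ (Fin n) × ℝ => c q.1 q.2)
        (fderiv ℝ (fun q : EuclideanSpace ℝ (Fin n) × ℝ => c q.1 q.2) (x t, t)) (x t, t) :=
      (hc (x t, t)).hasFDerivAt
    set L := fderiv ℝ (fun q : EuclideanSpace ℝ (Fin n) × ℝ => c q.1 q.2) (x t, t) with hL
    -- partial derivative in x
    have hpx : HasFDerivAt (fun y : EuclideanSpace ℝ (Fin n) => c y t)
        (L.comp (ContinuousLinearMap.inl ℝ (EuclideanSpace ℝ (Fin n)) ℝ)) (x t) := by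
      have h1 : HasFDerivAt (fun y : EuclideanSpace ℝ (Fin n) => (y, t))
          (ContinuousLinearMap.inl ℝ (EuclideanSpace ℝ (Fin n)) ℝ) (x t) :=
        (hasFDerivAt_id (x t)).prodMk (hasFDerivAt_const t (x t))
      exact hFd.comp (x t) h1
    -- partial derivative in t
    have hpt : HasDerivAt (fun s : ℝ => c (x t) s) (L (0, 1)) t := by
      have h1 : HasDerivAt (fun s : ℝ => ((x t : EuclideanSpace ℝ (Fin n)), s))
          ((0 : EuclideanSpace ℝ (Fin n)), (1 : ℝ)) t :=
        (hasDerivAt_const t (x t)).prodMk (hasDerivAt_id t)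
      exact hFd.comp_hasDerivAt t h1
    -- full derivative along trajectory
    have hxt : HasDerivAt (fun s => (x s, s)) (v t (x t), 1) t := by
      have := (hode t ht).prodMk (hasDerivAt_id t)
      simpa using this
    have hgt : HasDerivAt (fun s => c (x s) s) (L (v t (x t), 1)) t := by
      have := hFd.comp_hasDerivAt_of_eq t hxt rfl
      simpa [Function.comp_def] using this
    have hsplit : L (v t (x t), 1) = L (v t (x t), 0) + L (0, 1) := by
      rw [← L.map_add]
      norm_num
    have hzero : L (v t (x t), 1) = 0 := by
      rw [hsplit]
      have h1 : (fderiv ℝ (fun y => c y t) (x t)) (v t (x t)) = L (v t (x t), 0) := by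
        rw [hpx.fderiv]; rfl
      have h2 : deriv (fun s => c (x t) s) t = L (0, 1) := hpt.deriv
      have h3 := hconsist (x t) t
      rw [h1, h2] at h3
      exact h3
    rwa [hzero] at hgt
  have hconst : ∀ t ∈ Set.Icc (0:ℝ) 1, c (x t) t = c (x 0) 0 := by
    have hcont : ContinuousOn (fun s => c (x s) s) (Set.Icc 0 1) := fun t ht =>
      (key t ht).continuousAt.continuousWithinAt
    exact constant_of_has_deriv_right_zero hcont
      (fun t ht => (key t (Set.mem_Icc_of_Ico ht)).hasDerivWithinAt)
  refine ⟨hconst, ?_⟩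
  have h1 := hconst 1 ⟨by norm_num, le_refl 1⟩
  rw [h1, hbound]
end

section
/- Let (Ω, F, P) be a probability space, X : Ω → ℝⁿ measurable, and U : Ω → ℝⁿ bounded measurable; let Ū := E[U | σ(X)] denote the conditional expectation of U given the σ-algebra generated by X. Let f : ℝⁿ → ℝᵐ be bounded measurable, let c : ℝⁿ → ℝᵐ be twice continuously differentiable with bounded first and second derivatives, and let d : ℝᵐ × ℝᵐ → ℝ be twice continuously differentiable with bounded first and second derivatives. Then, as Δ → 0⁺, E[d(f(X), c(X − Δ·Ū))] − E[d(f(X), c(X − Δ·U))] = o(Δ). -/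
open MeasureTheory Asymptotics

set_option maxHeartbeats 1000000
set_option synthInstance.maxHeartbeats 1000000

lemma aux_lip {E F : Type*} [NormedAddCommGroup E] [NormedSpace ℝ E]
    [NormedAddCommGroup F] [NormedSpace ℝ F] {g : E → F} (hg : Differentiable ℝ g)
    {C : ℝ} (hC : ∀ y, ‖fderiv ℝ g y‖ ≤ C) (x y : E) : ‖g y - g x‖ ≤ C * ‖y - x‖ :=
  Convex.norm_image_sub_le_of_norm_hasFDerivWithin_le
    (fun z _ => (hg z).hasFDerivAt.hasFDerivWithinAt) (fun z _ => hC z)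
    convex_univ (Set.mem_univ x) (Set.mem_univ y)

lemma aux_taylor2 {E F : Type*} [NormedAddCommGroup E] [NormedSpace ℝ E]
    [NormedAddCommGroup F] [NormedSpace ℝ F] {g : E → F} (hg : Differentiable ℝ g)
    (hg' : Differentiable ℝ (fderiv ℝ g)) {M : ℝ}
    (hM : ∀ y, ‖fderiv ℝ (fderiv ℝ g) y‖ ≤ M) (x h : E) :
    ‖g (x + h) - g x - fderiv ℝ g x h‖ ≤ M * ‖h‖ ^ 2 := by
  have hlip : ∀ y, ‖fderiv ℝ g y - fderiv ℝ g x‖ ≤ M * ‖y - x‖ := fun y =>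
    aux_lip hg' hM x y
  have key : ∀ y ∈ Metric.closedBall x ‖h‖, HasFDerivWithinAt
      (fun y => g y - fderiv ℝ g x (y - x)) (fderiv ℝ g y - fderiv ℝ g x)
      (Metric.closedBall x ‖h‖) y := by
    intro y _
    have h1 : HasFDerivAt (fun y => g y - fderiv ℝ g x (y - x))
        (fderiv ℝ g y - fderiv ℝ g x) y := by
      have h2 : HasFDerivAt (fun y => fderiv ℝ g x (y - x)) (fderiv ℝ g x) y := by
        have := ((fderiv ℝ g x).hasFDerivAt (x := y - x)).comp y
          ((hasFDerivAt_id y).sub_const x)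
        simpa [Function.comp_def] using this
      have := (hg y).hasFDerivAt.sub h2
      exact this
    exact h1.hasFDerivWithinAt
  have bound : ∀ y ∈ Metric.closedBall x ‖h‖, ‖fderiv ℝ g y - fderiv ℝ g x‖ ≤ M * ‖h‖ := by
    intro y hy
    refine (hlip y).trans ?_
    have hM0 : 0 ≤ M := le_trans (by positivity) (hM x)
    have : ‖y - x‖ ≤ ‖h‖ := by simpa [dist_eq_norm] using hy
    nlinarith [norm_nonneg (y - x)]
  have := Convex.norm_image_sub_le_of_norm_hasFDerivWithin_le key bound
    (convex_closedBall x ‖h‖) (Metric.mem_closedBall_self (norm_nonneg h))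
    (by simp [dist_eq_norm] : x + h ∈ Metric.closedBall x ‖h‖)
  calc ‖g (x + h) - g x - fderiv ℝ g x h‖
      = ‖(g (x + h) - fderiv ℝ g x (x + h - x)) - (g x - fderiv ℝ g x (x - x))‖ := by
        congr 1; simp; abel
    _ ≤ M * ‖h‖ * ‖x + h - x‖ := this
    _ = M * ‖h‖ ^ 2 := by rw [add_sub_cancel_left]; ring

lemma aux_condexp_clm {α E F : Type*} [NormedAddCommGroup E] [NormedSpace ℝ E]
    [CompleteSpace E] [NormedAddCommGroup F] [NormedSpace ℝ F] [CompleteSpace F]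
    {m m0 : MeasurableSpace α} {μ : Measure α} (hm : m ≤ m0) [SigmaFinite (μ.trim hm)]
    (T : E →L[ℝ] F) {U : α → E} (hU : Integrable U μ) :
    (fun ω => T ((μ[U|m]) ω)) =ᵐ[μ] μ[fun ω => T (U ω)|m] := by
  refine ae_eq_condExp_of_forall_setIntegral_eq hm (T.integrable_comp hU)
    (fun s _ _ => (T.integrable_comp integrable_condExp).integrableOn)
    (fun s hs hμs => ?_) ?_
  · rw [T.integral_comp_comm integrable_condExp.integrableOn,
      setIntegral_condExp hm hU hs, ← T.integral_comp_comm hU.integrableOn]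
  · exact ((T.continuous.comp_stronglyMeasurable stronglyMeasurable_condExp)).aestronglyMeasurable

lemma aux_integral_condexp_apply {n : ℕ} {α : Type*} {m m0 : MeasurableSpace α}
    (hm : m ≤ m0) (P : Measure α) [IsProbabilityMeasure P]
    {U : α → EuclideanSpace ℝ (Fin n)} (hU : Integrable U P)
    (φ : α → EuclideanSpace ℝ (Fin n) →L[ℝ] ℝ)
    (hφm : ∀ v, StronglyMeasurable[m] (fun ω => φ ω v))
    {B : ℝ} (hφbd : ∀ ω, ‖φ ω‖ ≤ B) :
    ∫ ω, φ ω ((P[U|m]) ω) ∂P = ∫ ω, φ ω (U ω) ∂P := by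
  haveI : IsFiniteMeasure (P.trim hm) := isFiniteMeasure_trim hm
  set e := EuclideanSpace.basisFun (Fin n) ℝ with he
  have expand : ∀ (g : EuclideanSpace ℝ (Fin n) →L[ℝ] ℝ) (v : EuclideanSpace ℝ (Fin n)),
      g v = ∑ i, g (e i) * v i := by
    intro g v
    conv_lhs => rw [← e.sum_repr v]
    rw [map_sum]
    refine Finset.sum_congr rfl fun i _ => ?_
    rw [g.map_smul, EuclideanSpace.basisFun_repr, smul_eq_mul, mul_comm]
  have hgbd : ∀ i : Fin n, ∀ ω, ‖φ ω (e i)‖ ≤ B * ‖e i‖ := fun i ω =>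
    ((φ ω).le_opNorm (e i)).trans (by
      have := hφbd ω
      nlinarith [norm_nonneg (e i), norm_nonneg (φ ω)])
  have hUi : ∀ i : Fin n, Integrable (fun ω => U ω i) P := fun i => by
    simpa using (EuclideanSpace.proj (𝕜 := ℝ) i).integrable_comp hU
  have hUbar_i : ∀ i : Fin n, Integrable (fun ω => ((P[U|m]) ω) i) P := fun i => by
    simpa using (EuclideanSpace.proj (𝕜 := ℝ) i).integrable_comp
      (integrable_condExp (f := U) (m := m))
  have hgm : ∀ i : Fin n, AEStronglyMeasurable (fun ω => φ ω (e i)) P :=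
    fun i => ((hφm (e i)).mono hm).aestronglyMeasurable
  have hcoord : ∀ i : Fin n,
      (fun ω => ((P[U|m]) ω) i) =ᵐ[P] P[fun ω => U ω i|m] := fun i => by
    simpa using aux_condexp_clm hm (EuclideanSpace.proj i (𝕜 := ℝ)) hU
  calc ∫ ω, φ ω ((P[U|m]) ω) ∂P
      = ∫ ω, ∑ i, φ ω (e i) * ((P[U|m]) ω) i ∂P := by
        refine integral_congr_ae (Filter.Eventually.of_forall fun ω => ?_)
        exact expand (φ ω) _
    _ = ∑ i, ∫ ω, φ ω (e i) * ((P[U|m]) ω) i ∂P := by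
        refine integral_finset_sum _ fun i _ => ?_
        exact (hUbar_i i).bdd_mul (hgm i) (Filter.Eventually.of_forall (hgbd i))
    _ = ∑ i, ∫ ω, φ ω (e i) * U ω i ∂P := by
        refine Finset.sum_congr rfl fun i _ => ?_
        have h1 : ∫ ω, φ ω (e i) * ((P[U|m]) ω) i ∂P
            = ∫ ω, φ ω (e i) * (P[fun ω => U ω i|m]) ω ∂P := by
          refine integral_congr_ae ?_
          filter_upwards [hcoord i] with ω hω
          rw [hω]
        have h2 := condExp_stronglyMeasurable_mul_of_bound hm (hφm (e i)) (hUi i)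
          (B * ‖e i‖) (Filter.Eventually.of_forall (hgbd i))
        have h3 : ∫ ω, φ ω (e i) * (P[fun ω => U ω i|m]) ω ∂P
            = ∫ ω, (P[(fun ω => φ ω (e i)) * fun ω => U ω i|m]) ω ∂P := by
          refine integral_congr_ae ?_
          filter_upwards [h2] with ω hω
          simpa using hω.symm
        rw [h1, h3, integral_condExp hm]
        simp only [Pi.mul_apply]
    _ = ∫ ω, ∑ i, φ ω (e i) * U ω i ∂P := by
        refine (integral_finset_sum _ fun i _ => ?_).symm
        exact (hUi i).bdd_mul (hgm i) (Filter.Eventually.of_forall (hgbd i))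
    _ = ∫ ω, φ ω (U ω) ∂P := by
        refine integral_congr_ae (Filter.Eventually.of_forall fun ω => ?_)
        exact (expand (φ ω) _).symm

/-- Single-time-step core of Theorem 2 of the paper. -/
theorem consistency_distillation_eq_gct_up_to_littleO
    (n m : ℕ)
    {Ω : Type*} [MeasurableSpace Ω] (P : Measure Ω) [IsProbabilityMeasure P]
    (X U : Ω → EuclideanSpace ℝ (Fin n))
    (hX : Measurable X) (hU : Measurable U) (hUbd : ∃ C, ∀ ω, ‖U ω‖ ≤ C)
    (f : EuclideanSpace ℝ (Fin n) → EuclideanSpace ℝ (Fin m))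
    (hf : Measurable f) (hfbd : ∃ C, ∀ x, ‖f x‖ ≤ C)
    (c : EuclideanSpace ℝ (Fin n) → EuclideanSpace ℝ (Fin m))
    (hc : ContDiff ℝ 2 c)
    (hc1 : ∃ C, ∀ x, ‖fderiv ℝ c x‖ ≤ C)
    (hc2 : ∃ C, ∀ x, ‖fderiv ℝ (fderiv ℝ c) x‖ ≤ C)
    (d : EuclideanSpace ℝ (Fin m) × EuclideanSpace ℝ (Fin m) → ℝ)
    (hd : ContDiff ℝ 2 d)
    (hd1 : ∃ C, ∀ z, ‖fderiv ℝ d z‖ ≤ C)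
    (hd2 : ∃ C, ∀ z, ‖fderiv ℝ (fderiv ℝ d) z‖ ≤ C) :
    (fun Δ : ℝ =>
        (∫ ω, d (f (X ω),
            c (X ω - Δ • (P[U | MeasurableSpace.comap X inferInstance]) ω)) ∂P)
          - ∫ ω, d (f (X ω), c (X ω - Δ • U ω)) ∂P)
      =o[nhdsWithin (0:ℝ) (Set.Ioi 0)] fun Δ => Δ := by
  obtain ⟨Cu₀, hCu₀⟩ := hUbd
  obtain ⟨Cc1, hCc1⟩ := hc1
  obtain ⟨Cc2, hCc2⟩ := hc2
  obtain ⟨Cd1, hCd1⟩ := hd1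
  obtain ⟨Cd2, hCd2⟩ := hd2
  have hCc1_0 : 0 ≤ Cc1 := le_trans (norm_nonneg _) (hCc1 0)
  have hCc2_0 : 0 ≤ Cc2 := le_trans (by positivity) (hCc2 0)
  have hCd1_0 : 0 ≤ Cd1 := le_trans (norm_nonneg _) (hCd1 ((0 : EuclideanSpace ℝ (Fin m)), (0 : EuclideanSpace ℝ (Fin m))))
  have hCd2_0 : 0 ≤ Cd2 := le_trans (by positivity) (hCd2 ((0 : EuclideanSpace ℝ (Fin m)), (0 : EuclideanSpace ℝ (Fin m))))
  set Cu : ℝ := max Cu₀ 0 with hCu_def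
  have hCu : ∀ ω, ‖U ω‖ ≤ Cu := fun ω => (hCu₀ ω).trans (le_max_left _ _)
  have hCu0 : 0 ≤ Cu := le_max_right _ _
  -- the conditioning σ-algebra
  have hm : MeasurableSpace.comap X inferInstance ≤ (inferInstance : MeasurableSpace Ω) :=
    hX.comap_le
  haveI : IsFiniteMeasure (P.trim hm) := isFiniteMeasure_trim hm
  set Ub := P[U | (MeasurableSpace.comap X inferInstance)] with hUb_def
  -- basic smoothness and continuity facts
  have hcd : Differentiable ℝ c := hc.differentiable (by norm_num)
  have hcd' : Differentiable ℝ (fderiv ℝ c) :=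
    (hc.fderiv_right (by norm_num : (1:WithTop ℕ∞) + 1 ≤ 2)).differentiable one_ne_zero
  have hdd : Differentiable ℝ d := hd.differentiable (by norm_num)
  have hdd' : Differentiable ℝ (fderiv ℝ d) :=
    (hd.fderiv_right (by norm_num : (1:WithTop ℕ∞) + 1 ≤ 2)).differentiable one_ne_zero
  have hcc : Continuous c := hc.continuous
  have hc'c : Continuous (fderiv ℝ c) :=
    (hc.fderiv_right (by norm_num : (1:WithTop ℕ∞) + 1 ≤ 2)).continuous
  have hdc : Continuous d := hd.continuous
  have hd'c : Continuous (fderiv ℝ d) :=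
    (hd.fderiv_right (by norm_num : (1:WithTop ℕ∞) + 1 ≤ 2)).continuous
  -- the linearization operator
  set ℓ : EuclideanSpace ℝ (Fin n) → (EuclideanSpace ℝ (Fin n) →L[ℝ] ℝ) :=
    fun x => (fderiv ℝ d (f x, c x)).comp
      ((ContinuousLinearMap.inr ℝ (EuclideanSpace ℝ (Fin m)) (EuclideanSpace ℝ (Fin m))).comp
        (fderiv ℝ c x)) with hℓ_def
  have hℓ_apply : ∀ x v, ℓ x v = fderiv ℝ d (f x, c x) (0, fderiv ℝ c x v) := by
    intro x v
    simp [hℓ_def]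
  have hℓ_bd : ∀ x, ‖ℓ x‖ ≤ Cd1 * Cc1 := by
    intro x
    refine ContinuousLinearMap.opNorm_le_bound _ (by positivity) fun v => ?_
    rw [hℓ_apply]
    calc ‖fderiv ℝ d (f x, c x) (0, fderiv ℝ c x v)‖
        ≤ ‖fderiv ℝ d (f x, c x)‖ * ‖((0 : EuclideanSpace ℝ (Fin m)), fderiv ℝ c x v)‖ :=
          ContinuousLinearMap.le_opNorm _ _
      _ ≤ Cd1 * ‖fderiv ℝ c x v‖ := by
          have h1 := hCd1 (f x, c x)
          have h2 : ‖((0 : EuclideanSpace ℝ (Fin m)), fderiv ℝ c x v)‖ = ‖fderiv ℝ c x v‖ := by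
            simp [Prod.norm_def]
          rw [h2]
          exact mul_le_mul_of_nonneg_right h1 (norm_nonneg _)
      _ ≤ Cd1 * (Cc1 * ‖v‖) := by
          refine mul_le_mul_of_nonneg_left ?_ hCd1_0
          exact ((fderiv ℝ c x).le_opNorm v).trans
            (mul_le_mul_of_nonneg_right (hCc1 x) (norm_nonneg v))
      _ = Cd1 * Cc1 * ‖v‖ := by ring
  -- measurability
  have hℓ_meas : Measurable ℓ := by
    have h1 : Measurable fun x => fderiv ℝ d (f x, c x) :=
      hd'c.measurable.comp (hf.prodMk hcc.measurable)
    have h2 : Continuous fun x =>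
        (ContinuousLinearMap.inr ℝ (EuclideanSpace ℝ (Fin m))
          (EuclideanSpace ℝ (Fin m))).comp (fderiv ℝ c x) :=
      (isBoundedBilinearMap_comp.continuous).comp (continuous_const.prodMk hc'c)
    exact (isBoundedBilinearMap_comp.continuous).measurable.comp (h1.prodMk h2.measurable)
  have hXmX : Measurable[(MeasurableSpace.comap X inferInstance)] X := measurable_iff_comap_le.2 le_rfl
  have hφm : ∀ v, StronglyMeasurable[(MeasurableSpace.comap X inferInstance)] fun ω => ℓ (X ω) v := by
    intro v
    have h3 : Measurable fun A : EuclideanSpace ℝ (Fin n) →L[ℝ] ℝ => A v :=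
      (isBoundedBilinearMap_apply.continuous.comp
        (continuous_id.prodMk continuous_const)).measurable
    exact ((h3.comp hℓ_meas).comp hXmX).stronglyMeasurable
  have hUb_meas : Measurable Ub := (stronglyMeasurable_condExp.mono hm).measurable
  have hUint : Integrable U P :=
    ⟨hU.aestronglyMeasurable, HasFiniteIntegral.of_bounded (Filter.Eventually.of_forall hCu)⟩
  -- a.e. bound on the conditional expectation
  set Cb : ℝ := Real.sqrt (n * Cu^2) with hCb_def
  have hCb0 : 0 ≤ Cb := Real.sqrt_nonneg _
  have hUb_bd : ∀ᵐ ω ∂P, ‖Ub ω‖ ≤ Cb := by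
    have hcoord : ∀ i : Fin n, ∀ᵐ ω ∂P, |Ub ω i| ≤ Cu := by
      intro i
      have h1 : (fun ω => Ub ω i) =ᵐ[P] P[fun ω => U ω i|(MeasurableSpace.comap X inferInstance)] := by
        simpa using aux_condexp_clm hm (EuclideanSpace.proj i (𝕜 := ℝ)) hUint
      have habs : ∀ ω, |U ω i| ≤ Cu := by
        intro ω
        refine le_trans ?_ (hCu ω)
        rw [EuclideanSpace.norm_eq, ← Real.sqrt_sq_eq_abs]
        refine Real.sqrt_le_sqrt ?_
        have := Finset.single_le_sum (f := fun j => ‖U ω j‖^2)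
          (fun j _ => by positivity) (Finset.mem_univ i)
        simpa [Real.norm_eq_abs, sq_abs] using this
      have h2 := ae_bdd_condExp_of_ae_bdd (μ := P) (m := (MeasurableSpace.comap X inferInstance)) (R := ⟨Cu, hCu0⟩)
        (Filter.Eventually.of_forall fun ω => habs ω)
      filter_upwards [h1, h2] with ω hω1 hω2
      rw [hω1]
      exact hω2
    have hall := (MeasureTheory.ae_all_iff).2 hcoord
    filter_upwards [hall] with ω hω
    rw [EuclideanSpace.norm_eq, hCb_def]
    refine Real.sqrt_le_sqrt ?_
    calc ∑ i, ‖Ub ω i‖^2 ≤ ∑ _i : Fin n, Cu^2 := by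
          refine Finset.sum_le_sum fun i _ => ?_
          have := hω i
          rw [Real.norm_eq_abs]
          nlinarith [abs_nonneg (Ub ω i)]
      _ = n * Cu^2 := by simp [Finset.sum_const, Finset.card_univ, nsmul_eq_mul]
  -- global constants
  set CC : ℝ := max Cu Cb with hCC_def
  have hCC0 : 0 ≤ CC := le_trans hCu0 (le_max_left _ _)
  have hCuCC : ∀ ω, ‖U ω‖ ≤ CC := fun ω => (hCu ω).trans (le_max_left _ _)
  have hUbCC : ∀ᵐ ω ∂P, ‖Ub ω‖ ≤ CC := by
    filter_upwards [hUb_bd] with ω hω; exact hω.trans (le_max_right _ _)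
  set K : ℝ := Cd2 * (Cc1*CC + Cc2*CC^2)^2 + Cd1*(Cc2*CC^2) with hK_def
  have hK0 : 0 ≤ K := by positivity
  clear_value Cu Cb CC K
  clear_value ℓ Ub
  -- key pointwise Taylor estimate
  have key : ∀ (x v : EuclideanSpace ℝ (Fin n)) (Δ : ℝ), |Δ| ≤ 1 → ‖v‖ ≤ CC →
      |d (f x, c (x - Δ • v)) - d (f x, c x) + Δ * ℓ x v| ≤ K * Δ^2 := by
    intro x v Δ hΔ hv
    have hℓxv : ℓ x v = fderiv ℝ d (f x, c x) (0, fderiv ℝ c x v) := hℓ_apply x v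
    set L1 := fderiv ℝ c x with hL1
    set z : EuclideanSpace ℝ (Fin m) × EuclideanSpace ℝ (Fin m) := (f x, c x) with hz
    set k := c (x - Δ • v) - c x with hk
    clear_value L1 z k
    have hT1 : ‖k + Δ • L1 v‖ ≤ Cc2 * (Δ^2 * ‖v‖^2) := by
      have ht := aux_taylor2 hcd hcd' hCc2 x (-(Δ • v))
      have hx : x + -(Δ • v) = x - Δ • v := (sub_eq_add_neg x (Δ • v)).symm
      rw [hx] at ht
      have h3 : ‖-(Δ • v)‖^2 = Δ^2 * ‖v‖^2 := by
        rw [norm_neg, norm_smul, Real.norm_eq_abs, mul_pow, sq_abs]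
      rw [h3] at ht
      have heq : c (x - Δ • v) - c x - (fderiv ℝ c x) (-(Δ • v)) = k + Δ • L1 v := by
        rw [hk, hL1]
        simp [sub_neg_eq_add]
      rw [heq] at ht
      exact ht
    have hΔ2 : Δ^2 ≤ |Δ| := by nlinarith [abs_nonneg Δ, sq_abs Δ]
    have hkbd : ‖k‖ ≤ |Δ| * (Cc1*CC + Cc2*CC^2) := by
      have h1 : ‖Δ • L1 v‖ ≤ |Δ| * (Cc1 * ‖v‖) := by
        rw [norm_smul, Real.norm_eq_abs]
        have hL1bd : ‖L1‖ ≤ Cc1 := by rw [hL1]; exact hCc1 x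
        exact mul_le_mul_of_nonneg_left ((L1.le_opNorm v).trans
          (mul_le_mul_of_nonneg_right hL1bd (norm_nonneg v))) (abs_nonneg Δ)
      have h2 : ‖k‖ ≤ ‖k + Δ • L1 v‖ + ‖Δ • L1 v‖ := by
        have := norm_add_le (k + Δ • L1 v) (-(Δ • L1 v))
        simpa using this
      have hvCC : ‖v‖^2 ≤ CC^2 := by nlinarith [norm_nonneg v]
      nlinarith [norm_nonneg v, abs_nonneg Δ, mul_le_mul_of_nonneg_left hvCC hCc2_0,
        mul_le_mul_of_nonneg_left hΔ2 (mul_nonneg hCc2_0 (sq_nonneg ‖v‖)),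
        mul_le_mul_of_nonneg_left hv (mul_nonneg (abs_nonneg Δ) hCc1_0)]
    have hT2 : ‖d (z + ((0 : EuclideanSpace ℝ (Fin m)), k)) - d z
        - fderiv ℝ d z (0, k)‖ ≤ Cd2 * ‖((0 : EuclideanSpace ℝ (Fin m)), k)‖^2 :=
      aux_taylor2 hdd hdd' hCd2 z (0, k)
    have hz2 : z + ((0 : EuclideanSpace ℝ (Fin m)), k) = (f x, c (x - Δ • v)) := by
      rw [hz, hk, Prod.mk_add_mk]
      refine Prod.ext (add_zero _) ?_
      module
    have hnk : ‖((0 : EuclideanSpace ℝ (Fin m)), k)‖ = ‖k‖ := by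
      simp [Prod.norm_def]
    have hdec : ((0 : EuclideanSpace ℝ (Fin m)), k)
        = -(Δ • ((0 : EuclideanSpace ℝ (Fin m)), L1 v))
          + ((0 : EuclideanSpace ℝ (Fin m)), k + Δ • L1 v) := by
      rw [Prod.smul_mk, Prod.neg_mk, Prod.mk_add_mk]
      refine Prod.ext (by simp) (by module)
    have hlin : fderiv ℝ d z ((0 : EuclideanSpace ℝ (Fin m)), k)
        = -(Δ * ℓ x v) + fderiv ℝ d z (0, k + Δ • L1 v) := by
      have hsm : (fderiv ℝ d z) (Δ • ((0 : EuclideanSpace ℝ (Fin m)), L1 v)) = Δ * ℓ x v := by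
        rw [ContinuousLinearMap.map_smul, smul_eq_mul, hℓxv]
      rw [hdec, map_add, _root_.map_neg, hsm]
    have hfinal : d (f x, c (x - Δ • v)) - d z + Δ * ℓ x v
        = (d (z + ((0 : EuclideanSpace ℝ (Fin m)), k)) - d z
            - fderiv ℝ d z (0, k)) + fderiv ℝ d z (0, k + Δ • L1 v) := by
      rw [hz2, hlin]; ring
    have hlast : |fderiv ℝ d z (0, k + Δ • L1 v)| ≤ Cd1 * (Cc2 * (Δ^2 * ‖v‖^2)) := by
      have h1 : |fderiv ℝ d z (0, k + Δ • L1 v)|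
          ≤ ‖fderiv ℝ d z‖ * ‖((0 : EuclideanSpace ℝ (Fin m)), k + Δ • L1 v)‖ := by
        rw [← Real.norm_eq_abs]
        exact (fderiv ℝ d z).le_opNorm _
      have h2 : ‖((0 : EuclideanSpace ℝ (Fin m)), k + Δ • L1 v)‖ = ‖k + Δ • L1 v‖ := by
        simp [Prod.norm_def]
      rw [h2] at h1
      calc |fderiv ℝ d z (0, k + Δ • L1 v)| ≤ ‖fderiv ℝ d z‖ * ‖k + Δ • L1 v‖ := h1
        _ ≤ Cd1 * (Cc2 * (Δ^2 * ‖v‖^2)) := by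
            refine mul_le_mul (hCd1 z) hT1 (norm_nonneg _) hCd1_0
    have goal1 : |d (f x, c (x - Δ • v)) - d z + Δ * ℓ x v|
        ≤ Cd2 * ‖k‖^2 + Cd1 * (Cc2 * (Δ^2 * ‖v‖^2)) := by
      rw [hfinal]
      refine (abs_add_le _ _).trans ?_
      rw [← Real.norm_eq_abs (d (z + ((0 : EuclideanSpace ℝ (Fin m)), k)) - d z
        - fderiv ℝ d z (0, k))]
      have := hT2
      rw [hnk] at this
      exact add_le_add this hlast
    refine goal1.trans ?_
    have hksq : ‖k‖^2 ≤ (|Δ| * (Cc1*CC + Cc2*CC^2))^2 :=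
      pow_le_pow_left₀ (norm_nonneg k) hkbd 2
    have hvsq : ‖v‖^2 ≤ CC^2 := pow_le_pow_left₀ (norm_nonneg v) hv 2
    rw [hK_def]
    have e0 : ‖k‖^2 ≤ (Cc1*CC + Cc2*CC^2)^2 * Δ^2 := by
      refine hksq.trans_eq ?_
      rw [mul_pow, sq_abs]; ring
    have e1 : Cd2 * ‖k‖^2 ≤ Cd2 * ((Cc1*CC + Cc2*CC^2)^2 * Δ^2) :=
      mul_le_mul_of_nonneg_left e0 hCd2_0
    have e2 : Cd1 * (Cc2 * (Δ^2 * ‖v‖^2)) ≤ Cd1 * (Cc2 * (Δ^2 * CC^2)) :=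
      mul_le_mul_of_nonneg_left (mul_le_mul_of_nonneg_left
        (mul_le_mul_of_nonneg_left hvsq (sq_nonneg Δ)) hCc2_0) hCd1_0
    have e3 : (Cd2 * (Cc1*CC + Cc2*CC^2)^2 + Cd1*(Cc2*CC^2)) * Δ^2
        = Cd2 * ((Cc1*CC + Cc2*CC^2)^2 * Δ^2) + Cd1 * (Cc2 * (Δ^2 * CC^2)) := by ring
    rw [e3]
    exact add_le_add e1 e2
  -- measurability / integrability of the integrands
  have hbase_m : Measurable (fun ω => d (f (X ω), c (X ω))) :=
    hdc.measurable.comp ((hf.comp hX).prodMk (hcc.measurable.comp hX))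
  have hA_m : ∀ (Δ : ℝ) (V : Ω → EuclideanSpace ℝ (Fin n)), Measurable V →
      Measurable (fun ω => d (f (X ω), c (X ω - Δ • V ω))) := by
    intro Δ V hV
    exact hdc.measurable.comp ((hf.comp hX).prodMk
      (hcc.measurable.comp (hX.sub (hV.const_smul Δ))))
  have hℓV_m : ∀ V : Ω → EuclideanSpace ℝ (Fin n), Measurable V →
      Measurable (fun ω => ℓ (X ω) (V ω)) := by
    intro V hV
    exact (isBoundedBilinearMap_apply.continuous).measurable.comp
      ((hℓ_meas.comp hX).prodMk hV)
  have hℓV_bd : ∀ (V : Ω → EuclideanSpace ℝ (Fin n)) (ω : Ω), ‖V ω‖ ≤ CC →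
      |ℓ (X ω) (V ω)| ≤ Cd1*Cc1*CC := by
    intro V ω hω
    rw [← Real.norm_eq_abs]
    calc ‖ℓ (X ω) (V ω)‖ ≤ ‖ℓ (X ω)‖ * ‖V ω‖ := (ℓ (X ω)).le_opNorm _
      _ ≤ Cd1*Cc1*CC := mul_le_mul (hℓ_bd _) hω (norm_nonneg _) (by positivity)
  have hℓV_int : ∀ (V : Ω → EuclideanSpace ℝ (Fin n)), Measurable V →
      (∀ᵐ ω ∂P, ‖V ω‖ ≤ CC) → Integrable (fun ω => ℓ (X ω) (V ω)) P := by
    intro V hV hVbd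
    refine ⟨(hℓV_m V hV).aestronglyMeasurable,
      HasFiniteIntegral.of_bounded (C := Cd1*Cc1*CC) ?_⟩
    filter_upwards [hVbd] with ω hω
    rw [Real.norm_eq_abs]
    exact hℓV_bd V ω hω
  have hdiff_bd : ∀ (Δ : ℝ) (x v : EuclideanSpace ℝ (Fin n)), ‖v‖ ≤ CC →
      |d (f x, c (x - Δ • v)) - d (f x, c x)| ≤ Cd1*(Cc1*(|Δ| * CC)) := by
    intro Δ x v hv
    have h1 : |d (f x, c (x - Δ • v)) - d (f x, c x)|
        ≤ Cd1 * ‖((f x, c (x - Δ • v)) :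
            EuclideanSpace ℝ (Fin m) × EuclideanSpace ℝ (Fin m)) - (f x, c x)‖ := by
      rw [← Real.norm_eq_abs]
      exact aux_lip hdd hCd1 _ _
    have h2 : ‖((f x, c (x - Δ • v)) :
        EuclideanSpace ℝ (Fin m) × EuclideanSpace ℝ (Fin m)) - (f x, c x)‖
        = ‖c (x - Δ • v) - c x‖ := by
      rw [Prod.mk_sub_mk]
      simp [Prod.norm_def]
    have h3 : ‖c (x - Δ • v) - c x‖ ≤ Cc1 * ‖(x - Δ • v) - x‖ := aux_lip hcd hCc1 _ _
    have h4 : ‖(x - Δ • v) - x‖ = |Δ| * ‖v‖ := by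
      have : (x - Δ • v) - x = -(Δ • v) := by abel
      rw [this, norm_neg, norm_smul, Real.norm_eq_abs]
    rw [h2] at h1
    refine h1.trans ?_
    refine mul_le_mul_of_nonneg_left ?_ hCd1_0
    refine (h3.trans ?_)
    rw [h4]
    refine mul_le_mul_of_nonneg_left ?_ hCc1_0
    exact mul_le_mul_of_nonneg_left hv (abs_nonneg Δ)
  have hdiff_int : ∀ (Δ : ℝ) (V : Ω → EuclideanSpace ℝ (Fin n)), Measurable V →
      (∀ᵐ ω ∂P, ‖V ω‖ ≤ CC) →
      Integrable (fun ω => d (f (X ω), c (X ω - Δ • V ω)) - d (f (X ω), c (X ω))) P := by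
    intro Δ V hV hVbd
    refine ⟨((hA_m Δ V hV).sub hbase_m).aestronglyMeasurable,
      HasFiniteIntegral.of_bounded (C := Cd1*(Cc1*(|Δ| * CC))) ?_⟩
    filter_upwards [hVbd] with ω hω
    rw [Real.norm_eq_abs]
    exact hdiff_bd Δ (X ω) (V ω) hω
  have hUCCae : ∀ᵐ ω ∂P, ‖U ω‖ ≤ CC := Filter.Eventually.of_forall hCuCC
  by_cases hbase_int : Integrable (fun ω => d (f (X ω), c (X ω))) P
  · -- main case
    have hmain : ∀ Δ : ℝ, |Δ| ≤ 1 →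
        |(∫ ω, d (f (X ω), c (X ω - Δ • Ub ω)) ∂P)
          - ∫ ω, d (f (X ω), c (X ω - Δ • U ω)) ∂P| ≤ 2*K*Δ^2 := by
      intro Δ hΔ
      have hRfact : ∀ (V : Ω → EuclideanSpace ℝ (Fin n)), Measurable V →
          (∀ᵐ ω ∂P, ‖V ω‖ ≤ CC) →
          Integrable (fun ω => d (f (X ω), c (X ω - Δ • V ω)) - d (f (X ω), c (X ω))
            + Δ * ℓ (X ω) (V ω)) P ∧
          |∫ ω, (d (f (X ω), c (X ω - Δ • V ω)) - d (f (X ω), c (X ω))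
            + Δ * ℓ (X ω) (V ω)) ∂P| ≤ K * Δ^2 := by
        intro V hV hVbd
        have hint : Integrable (fun ω => d (f (X ω), c (X ω - Δ • V ω))
            - d (f (X ω), c (X ω)) + Δ * ℓ (X ω) (V ω)) P :=
          (hdiff_int Δ V hV hVbd).add ((hℓV_int V hV hVbd).const_mul Δ)
        refine ⟨hint, ?_⟩
        have hb := norm_integral_le_of_norm_le_const (μ := P) (C := K * Δ^2)
          (f := fun ω => d (f (X ω), c (X ω - Δ • V ω)) - d (f (X ω), c (X ω))
            + Δ * ℓ (X ω) (V ω)) ?_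
        · rw [← Real.norm_eq_abs]
          simpa using hb
        · filter_upwards [hVbd] with ω hω
          rw [Real.norm_eq_abs]
          exact key (X ω) (V ω) Δ hΔ hω
      have hdecomp : ∀ (V : Ω → EuclideanSpace ℝ (Fin n)), Measurable V →
          (∀ᵐ ω ∂P, ‖V ω‖ ≤ CC) →
          ∫ ω, d (f (X ω), c (X ω - Δ • V ω)) ∂P
            = (∫ ω, d (f (X ω), c (X ω)) ∂P) - Δ * (∫ ω, ℓ (X ω) (V ω) ∂P)
              + ∫ ω, (d (f (X ω), c (X ω - Δ • V ω)) - d (f (X ω), c (X ω))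
                + Δ * ℓ (X ω) (V ω)) ∂P := by
        intro V hV hVbd
        have hsplit : (fun ω => d (f (X ω), c (X ω - Δ • V ω)))
            = fun ω => d (f (X ω), c (X ω)) + (-(Δ * ℓ (X ω) (V ω))
              + (d (f (X ω), c (X ω - Δ • V ω)) - d (f (X ω), c (X ω))
                + Δ * ℓ (X ω) (V ω))) := funext fun ω => by ring
        have i2 : Integrable (fun ω => -(Δ * ℓ (X ω) (V ω))) P :=
          ((hℓV_int V hV hVbd).const_mul Δ).neg
        have i3 : Integrable (fun ω => d (f (X ω), c (X ω - Δ • V ω))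
            - d (f (X ω), c (X ω)) + Δ * ℓ (X ω) (V ω)) P := (hRfact V hV hVbd).1
        have i23 : Integrable (fun ω => -(Δ * ℓ (X ω) (V ω))
            + (d (f (X ω), c (X ω - Δ • V ω)) - d (f (X ω), c (X ω))
              + Δ * ℓ (X ω) (V ω))) P := i2.add i3
        rw [hsplit, integral_add hbase_int i23, integral_add i2 i3,
          integral_neg, integral_const_mul]
        ring
      have hswap : ∫ ω, ℓ (X ω) (Ub ω) ∂P = ∫ ω, ℓ (X ω) (U ω) ∂P := by
        rw [hUb_def]
        exact aux_integral_condexp_apply hm P hUint (fun ω => ℓ (X ω)) hφm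
          (fun ω => hℓ_bd (X ω))
      rw [hdecomp Ub hUb_meas hUbCC, hdecomp U hU hUCCae, hswap]
      have h1 := (hRfact Ub hUb_meas hUbCC).2
      have h2 := (hRfact U hU hUCCae).2
      set R1 := ∫ ω, (d (f (X ω), c (X ω - Δ • Ub ω)) - d (f (X ω), c (X ω))
        + Δ * ℓ (X ω) (Ub ω)) ∂P
      set R2 := ∫ ω, (d (f (X ω), c (X ω - Δ • U ω)) - d (f (X ω), c (X ω))
        + Δ * ℓ (X ω) (U ω)) ∂P
      have heq : (∫ ω, d (f (X ω), c (X ω)) ∂P) - Δ * (∫ ω, ℓ (X ω) (U ω) ∂P) + R1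
          - ((∫ ω, d (f (X ω), c (X ω)) ∂P) - Δ * (∫ ω, ℓ (X ω) (U ω) ∂P) + R2)
          = R1 - R2 := by ring
      rw [heq]
      calc |R1 - R2| ≤ |R1| + |R2| := abs_sub R1 R2
        _ ≤ 2*K*Δ^2 := by linarith
    -- conclude littleO
    rw [isLittleO_iff]
    intro ε hε
    have h2K : (0:ℝ) < 2*K+1 := by linarith
    have hδ : 0 < min 1 (ε / (2*K+1)) := lt_min one_pos (div_pos hε h2K)
    filter_upwards [Ioc_mem_nhdsGT_of_mem (Set.mem_Ico.2 ⟨le_refl (0:ℝ), hδ⟩)] with Δ hΔ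
    obtain ⟨h0, h1⟩ := hΔ
    have hΔ1 : |Δ| ≤ 1 := by
      rw [abs_of_pos h0]
      exact h1.trans (min_le_left _ _)
    have hmb := hmain Δ hΔ1
    have h3 : Δ * (2*K+1) ≤ ε := (le_div_iff₀ h2K).1 (h1.trans (min_le_right _ _))
    rw [Real.norm_eq_abs, Real.norm_eq_abs, abs_of_pos h0]
    refine hmb.trans ?_
    nlinarith [sq_nonneg Δ, hK0, h0.le]
  · -- degenerate case: all integrals vanish
    have hnot : ∀ (Δ : ℝ) (V : Ω → EuclideanSpace ℝ (Fin n)), Measurable V →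
        (∀ᵐ ω ∂P, ‖V ω‖ ≤ CC) →
        ¬ Integrable (fun ω => d (f (X ω), c (X ω - Δ • V ω))) P := by
      intro Δ V hV hVbd hcon
      refine hbase_int ?_
      have h5 := hcon.sub (hdiff_int Δ V hV hVbd)
      have heq : (fun ω => d (f (X ω), c (X ω - Δ • V ω)))
          - (fun ω => d (f (X ω), c (X ω - Δ • V ω)) - d (f (X ω), c (X ω)))
          = fun ω => d (f (X ω), c (X ω)) := by
        funext ω
        simp only [Pi.sub_apply]
        ring
      exact heq ▸ h5
    have hzero : (fun Δ : ℝ =>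
        (∫ ω, d (f (X ω), c (X ω - Δ • Ub ω)) ∂P)
          - ∫ ω, d (f (X ω), c (X ω - Δ • U ω)) ∂P) = fun _ => (0:ℝ) := by
      funext Δ
      rw [integral_undef (hnot Δ Ub hUb_meas hUbCC),
        integral_undef (hnot Δ U hU hUCCae)]
      ring
    rw [hzero]
    exact isLittleO_zero _ _
end
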